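/- Let k ≥ 2 and d ≥ 4 be integers, and let Γ be a strongly connected digraph with dim(Γ) = k and diameter d. Then the order of Γ is strictly less than d^(2k) + k. -/
import Mathlib


/-!  Common definitions for weak metric dimension of digraphs.

A digraph is modelled by a vertex type `V` together with an arc relation
`A : V → V → Prop` (simplicity is expressed by `Irreflexive A`). -/

/-- There is a directed walk of length `n` from `x` to `y`. -/
def walkLen {V : Type*} (A : V → V → Prop) : ℕ → V → V → Prop
  | 0 => fun x y => x = y
  | n + 1 => fun x y => ∃ z, A x z ∧ walkLen A n z y

/-- `∂(x,y)`: the length of a shortest directed path from `x` to `y`. -/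
noncomputable def ddist {V : Type*} (A : V → V → Prop) (x y : V) : ℕ :=
  sInf {n | walkLen A n x y}

/-- The two way distance `∂̃(x,y) = (∂(x,y), ∂(y,x))`. -/
noncomputable def twoDist {V : Type*} (A : V → V → Prop) (x y : V) : ℕ × ℕ :=
  (ddist A x y, ddist A y x)

/-- Strong connectivity: any vertex can be reached from any vertex by a directed walk. -/
def IsStronglyConnected {V : Type*} (A : V → V → Prop) : Prop :=
  ∀ x y : V, ∃ n, walkLen A n x y

/-- `S` is a weakly resolving set: distinct vertices have different tuples of
two way distances from the vertices of `S`. -/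
def IsWeaklyResolving {V : Type*} (A : V → V → Prop) (S : Set V) : Prop :=
  ∀ u v : V, (∀ w ∈ S, twoDist A w u = twoDist A w v) → u = v

/-- The weak metric dimension: minimum cardinality of a weakly resolving set. -/
noncomputable def wdim {V : Type*} [Fintype V] (A : V → V → Prop) : ℕ :=
  sInf {k | ∃ S : Finset V, S.card = k ∧ IsWeaklyResolving A ↑S}

/-- The diameter: the maximum of `∂(x,y)` over all ordered pairs of vertices. -/
noncomputable def diam {V : Type*} [Fintype V] (A : V → V → Prop) : ℕ :=
  sSup {m | ∃ x y : V, ddist A x y = m}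

/-- `f(n,d)`: the least positive integer `k` with `k + d^(2k) ≥ n`. -/
noncomputable def fnd (n d : ℕ) : ℕ :=
  sInf {k | 0 < k ∧ n ≤ k + d ^ (2 * k)}

/-- An isomorphism from `(V, A)` onto `(W, B)` exists. -/
def IsIsoTo {V W : Type*} (A : V → V → Prop) (B : W → W → Prop) : Prop :=
  ∃ e : V ≃ W, ∀ x y, A x y ↔ B (e x) (e y)

/-- The digraph of Example 2.3: vertices `v_1, …, v_n` are the elements
`0, …, n-1` of `Fin n` (so `v_i` is `i - 1`). -/
def egArc (n d : ℕ) : Fin n → Fin n → Prop := fun x y =>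
  (x.val = n - 1 ∧ y.val ≤ n - d) ∨
  (x.val ≤ n - d ∧ y.val = n - d + 1) ∨
  (n - d + 1 ≤ x.val ∧ x.val ≤ n - 2 ∧ y.val = x.val + 1)

/-- The `r`-th (0-based) coordinate of the tuple `v_{j+1}` in Construction 2.4;
it lies in `{1, …, d}` and `j = Σ_r (coord r - 1) d^r`. -/
def gcoord (d j r : ℕ) : ℕ := j / d ^ r % d + 1

/-- The arc relation of Construction 2.4, with the `u`-vertices `Fin k` on the left
and the `v`-vertices `Fin m` on the right of the sum. -/
def gammaArcKM (d k : ℕ) {m : ℕ} : Fin k ⊕ Fin m → Fin k ⊕ Fin m → Prop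
  | .inl _, .inl _ => False
  | .inl i, .inr j => gcoord d j.val (2 * i.val) = 1
  | .inr j, .inl i => gcoord d j.val (2 * i.val + 1) = 1
  | .inr j, .inr l => j ≠ l ∧ ∀ r < k,
      gcoord d l.val (2 * r) ≤ gcoord d j.val (2 * r) + 1 ∧
      gcoord d j.val (2 * r + 1) ≤ gcoord d l.val (2 * r + 1) + 1

/-- The arc relation of `Γ̄`: `Γ` of Construction 2.4 together with symmetric arcs
between any two distinct `u`-vertices. -/
def gammaBarArcKM (d k : ℕ) {m : ℕ} : Fin k ⊕ Fin m → Fin k ⊕ Fin m → Prop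
  | .inl i, .inl i' => i ≠ i'
  | x, y => gammaArcKM d k x y

/-- The directed cycle of length `m` on `Fin m`. -/
def cycArc (m : ℕ) [NeZero m] : Fin m → Fin m → Prop := fun x y => y = x + 1

/-- `σ` is an automorphism of the digraph `(V, A)`. -/
def IsDigraphAuto {V : Type*} (A : V → V → Prop) (σ : V ≃ V) : Prop :=
  ∀ a b, A a b ↔ A (σ a) (σ b)

/-- Vertex-transitivity. -/
def IsVertexTransitive {V : Type*} (A : V → V → Prop) : Prop :=
  ∀ x y : V, ∃ σ : V ≃ V, IsDigraphAuto A σ ∧ σ x = y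

/-- Weak distance-transitivity. -/
def IsWeaklyDistanceTransitive {V : Type*} (A : V → V → Prop) : Prop :=
  ∀ x y x' y' : V, twoDist A x y = twoDist A x' y' →
    ∃ σ : V ≃ V, IsDigraphAuto A σ ∧ σ x = x' ∧ σ y = y'

/-- Weak distance-regularity. -/
noncomputable def IsWeaklyDistanceRegular {V : Type*} (A : V → V → Prop) : Prop :=
  ∀ i j : ℕ × ℕ, (∃ a b : V, twoDist A a b = i) → (∃ a b : V, twoDist A a b = j) →
    ∀ x y x' y' : V, twoDist A x y = twoDist A x' y' →
      Set.ncard {z : V | twoDist A x z = i ∧ twoDist A z y = j} =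
      Set.ncard {z : V | twoDist A x' z = i ∧ twoDist A z y' = j}

/-- The complete digraph `K_t`. -/
def Krel (t : ℕ) : Fin t → Fin t → Prop := fun x y => x ≠ y

/-- The null digraph `K̄_t`. -/
def Nrel (t : ℕ) : Fin t → Fin t → Prop := fun _ _ => False

/-- The directed path `P_2` of length `1`. -/
def P2rel : Fin 2 → Fin 2 → Prop := fun x y => x = 0 ∧ y = 1

/-- The digraph `G_1` on `{0,1,2}` with arcs `(0,1),(1,2),(2,1),(2,0)`. -/
def G1rel : Fin 3 → Fin 3 → Prop := fun x y =>
  (x = 0 ∧ y = 1) ∨ (x = 1 ∧ y = 2) ∨ (x = 2 ∧ y = 1) ∨ (x = 2 ∧ y = 0)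

/-- The digraph `G_2` on `{0,1,2}` with arcs `(0,1),(1,0),(1,2),(2,1),(2,0)`. -/
def G2rel : Fin 3 → Fin 3 → Prop := fun x y =>
  (x = 0 ∧ y = 1) ∨ (x = 1 ∧ y = 0) ∨ (x = 1 ∧ y = 2) ∨ (x = 2 ∧ y = 1) ∨ (x = 2 ∧ y = 0)

/-- The generalized lexicographic product `G[H₀, H₁, H₂]` for a digraph `G` on `{0,1,2}`. -/
def glex3 {α β γ : Type*} (G : Fin 3 → Fin 3 → Prop)
    (H0 : α → α → Prop) (H1 : β → β → Prop) (H2 : γ → γ → Prop) :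
    α ⊕ β ⊕ γ → α ⊕ β ⊕ γ → Prop
  | .inl x, .inl y => H0 x y
  | .inl _, .inr (.inl _) => G 0 1
  | .inl _, .inr (.inr _) => G 0 2
  | .inr (.inl _), .inl _ => G 1 0
  | .inr (.inl x), .inr (.inl y) => H1 x y
  | .inr (.inl _), .inr (.inr _) => G 1 2
  | .inr (.inr _), .inl _ => G 2 0
  | .inr (.inr _), .inr (.inl _) => G 2 1
  | .inr (.inr x), .inr (.inr y) => H2 x y

/-- A clique in a digraph: the two way distance between any two distinct
vertices of `S` is `(1,1)`. -/
noncomputable def DClique {V : Type*} (A : V → V → Prop) (S : Set V) : Prop :=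
  ∀ u ∈ S, ∀ v ∈ S, u ≠ v → twoDist A u v = (1, 1)

/-- An independent set in a digraph: no arcs inside `R`. -/
def DIndependent {V : Type*} (A : V → V → Prop) (R : Set V) : Prop :=
  ∀ u ∈ R, ∀ v ∈ R, ¬ A u v

section AuxWMD

variable {V : Type*} (A : V → V → Prop)

lemma walkLen_trans' : ∀ m n (x y z : V), walkLen A m x y → walkLen A n y z →
    walkLen A (m + n) x z := by
  intro m
  induction m with
  | zero =>
    intro n x y z h1 h2
    have hxy : x = y := h1
    subst hxy
    simpa using h2
  | succ m ih =>
    intro n x y z h1 h2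
    obtain ⟨t, hA, hw⟩ := h1
    rw [Nat.succ_add]
    exact ⟨t, hA, ih n t y z hw h2⟩

lemma walkLen_ddist' (hsc : IsStronglyConnected A) (x y : V) :
    walkLen A (ddist A x y) x y := Nat.sInf_mem (hsc x y)

lemma ddist_triangle' (hsc : IsStronglyConnected A) (x y z : V) :
    ddist A x z ≤ ddist A x y + ddist A y z :=
  Nat.sInf_le (walkLen_trans' A _ _ x y z (walkLen_ddist' A hsc x y)
    (walkLen_ddist' A hsc y z))

lemma ddist_self' (x : V) : ddist A x x = 0 :=
  Nat.sInf_eq_zero.mpr (Or.inl rfl)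

lemma eq_of_ddist_eq_zero' (hsc : IsStronglyConnected A) {x y : V}
    (h : ddist A x y = 0) : x = y := by
  have hw := walkLen_ddist' A hsc x y
  rw [h] at hw
  exact hw

lemma one_le_ddist' (hsc : IsStronglyConnected A) {x y : V} (h : x ≠ y) :
    1 ≤ ddist A x y := by
  rcases Nat.eq_zero_or_pos (ddist A x y) with h0 | h1
  · exact absurd (eq_of_ddist_eq_zero' A hsc h0) h
  · exact h1

lemma ddist_le_diam' [Fintype V] (x y : V) : ddist A x y ≤ diam A := by
  have hbdd : BddAbove {m | ∃ x y : V, ddist A x y = m} := by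
    have hEq : {m | ∃ x y : V, ddist A x y = m} =
        Set.range (fun p : V × V => ddist A p.1 p.2) := by
      ext m
      constructor
      · rintro ⟨x, y, rfl⟩; exact ⟨(x, y), rfl⟩
      · rintro ⟨⟨x, y⟩, rfl⟩; exact ⟨x, y, rfl⟩
    rw [hEq]
    exact (Set.finite_range _).bddAbove
  exact le_csSup hbdd ⟨x, y, rfl⟩

end AuxWMD

/-- Lemma 2.6(iii). If `k ≥ 2` and `d ≥ 4`, then a `k`-dimensional
digraph with diameter `d` has order strictly less than `d^(2k) + k`. -/
theorem card_lt_of_dim_diam {V : Type*} [Fintype V] (A : V → V → Prop)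
    (hirr : Irreflexive A) (hsc : IsStronglyConnected A)
    (k d : ℕ) (hk : 2 ≤ k) (hd : 4 ≤ d)
    (hdim : wdim A = k) (hdiam : diam A = d) :
    Fintype.card V < d ^ (2 * k) + k := by
  classical
  have d0 : 0 < d := by omega
  have hd1 : d - 1 < d := by omega
  -- the whole vertex set is weakly resolving
  have huniv : IsWeaklyResolving A ((Finset.univ : Finset V) : Set V) := by
    intro u v h
    have h1 := h u (by simp)
    have h2 : ddist A u v = 0 := by
      have h3 := congrArg Prod.fst h1
      simp only [twoDist, ddist_self'] at h3
      exact h3.symm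
    exact eq_of_ddist_eq_zero' A hsc h2
  have hne : {n | ∃ S : Finset V, S.card = n ∧ IsWeaklyResolving A ↑S}.Nonempty :=
    ⟨Finset.univ.card, Finset.univ, rfl, huniv⟩
  have hm : wdim A ∈ {n | ∃ S : Finset V, S.card = n ∧ IsWeaklyResolving A ↑S} :=
    Nat.sInf_mem hne
  rw [hdim] at hm
  obtain ⟨W, hWcard, hWres⟩ := hm
  obtain ⟨w1, hw1, w2, hw2, hww⟩ := Finset.one_lt_card.mp
    (show 1 < W.card by rw [hWcard]; omega)
  have hd_le : ∀ x y : V, ddist A x y ≤ d := fun x y => hdiam ▸ ddist_le_diam' A x y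
  have hrec : ∀ {x y : V}, x ≠ y → (ddist A x y - 1) % d + 1 = ddist A x y := by
    intro x y hxy
    have h1 := one_le_ddist' A hsc hxy
    have h2 : ddist A x y ≤ d := hd_le x y
    rw [Nat.mod_eq_of_lt (by omega)]
    omega
  set φ : V → (↥W → Fin d × Fin d) := fun v w =>
    (⟨(ddist A w.1 v - 1) % d, Nat.mod_lt _ d0⟩,
     ⟨(ddist A v w.1 - 1) % d, Nat.mod_lt _ d0⟩) with hφ
  have hinj : Set.InjOn φ ↑(Wᶜ : Finset V) := by
    intro u hu v hv h
    simp only [Finset.coe_compl, Set.mem_compl_iff, Finset.mem_coe] at hu hv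
    apply hWres
    intro w hwS
    have hw : w ∈ W := hwS
    have hweq := congrFun h ⟨w, hw⟩
    have e1 : (ddist A w u - 1) % d = (ddist A w v - 1) % d :=
      congrArg (fun p => (p.1 : ℕ)) hweq
    have e2 : (ddist A u w - 1) % d = (ddist A v w - 1) % d :=
      congrArg (fun p => (p.2 : ℕ)) hweq
    have r1 := hrec (show w ≠ u by rintro rfl; exact hu hw)
    have r2 := hrec (show w ≠ v by rintro rfl; exact hv hw)
    have r3 := hrec (show u ≠ w by rintro rfl; exact hu hw)
    have r4 := hrec (show v ≠ w by rintro rfl; exact hv hw)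
    simp only [twoDist, Prod.mk.injEq]
    omega
  have key : ∃ g : ↥W → Fin d × Fin d, ∀ v ∈ (Wᶜ : Finset V), φ v ≠ g := by
    by_cases hcase : ddist A w1 w2 + 1 < d
    · refine ⟨fun w => if w.1 = w2 then ((⟨0, d0⟩ : Fin d), (⟨d - 1, hd1⟩ : Fin d))
        else ((⟨d - 1, hd1⟩ : Fin d), (⟨d - 1, hd1⟩ : Fin d)), ?_⟩
      intro v hv h
      have hvW : v ∉ W := Finset.mem_compl.mp hv
      have h1 := congrFun h ⟨w1, hw1⟩
      have h2 := congrFun h ⟨w2, hw2⟩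
      simp only [if_neg hww, if_pos rfl] at h1 h2
      have e1 : (ddist A w1 v - 1) % d = d - 1 := congrArg (fun p => (p.1 : ℕ)) h1
      have e2 : (ddist A w2 v - 1) % d = 0 := congrArg (fun p => (p.1 : ℕ)) h2
      have r1 := hrec (show w1 ≠ v by rintro rfl; exact hvW hw1)
      have r2 := hrec (show w2 ≠ v by rintro rfl; exact hvW hw2)
      have tri := ddist_triangle' A hsc w1 w2 v
      omega
    · refine ⟨fun w => if w.1 = w2 then ((⟨d - 1, hd1⟩ : Fin d), (⟨0, d0⟩ : Fin d))
        else if w.1 = w1 then ((⟨0, d0⟩ : Fin d), (⟨d - 1, hd1⟩ : Fin d))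
        else ((⟨d - 1, hd1⟩ : Fin d), (⟨d - 1, hd1⟩ : Fin d)), ?_⟩
      intro v hv h
      have hvW : v ∉ W := Finset.mem_compl.mp hv
      have h1 := congrFun h ⟨w1, hw1⟩
      have h2 := congrFun h ⟨w2, hw2⟩
      simp only [if_neg hww, if_pos rfl] at h1 h2
      have e1 : (ddist A w1 v - 1) % d = 0 := congrArg (fun p => (p.1 : ℕ)) h1
      have e2 : (ddist A v w2 - 1) % d = 0 := congrArg (fun p => (p.2 : ℕ)) h2
      have r1 := hrec (show w1 ≠ v by rintro rfl; exact hvW hw1)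
      have r2 := hrec (show v ≠ w2 by rintro rfl; exact hvW hw2)
      have tri := ddist_triangle' A hsc w1 v w2
      omega
  obtain ⟨g, hg⟩ := key
  have hmaps : ∀ v ∈ (Wᶜ : Finset V), φ v ∈ Finset.univ.erase g := fun v hv =>
    Finset.mem_erase.mpr ⟨hg v hv, Finset.mem_univ _⟩
  have hcard1 : (Wᶜ : Finset V).card ≤ (Finset.univ.erase g).card :=
    Finset.card_le_card_of_injOn φ hmaps hinj
  have hcard2 : (Finset.univ.erase g).card = Fintype.card (↥W → Fin d × Fin d) - 1 := by
    rw [Finset.card_erase_of_mem (Finset.mem_univ g), Finset.card_univ]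
  have hcard3 : Fintype.card (↥W → Fin d × Fin d) = d ^ (2 * k) := by
    rw [Fintype.card_fun, Fintype.card_prod, Fintype.card_fin, Fintype.card_coe, hWcard,
      pow_mul, sq]
  rw [hcard2, hcard3] at hcard1
  have hpow : 1 ≤ d ^ (2 * k) := Nat.one_le_pow _ _ d0
  have htot : W.card + (Wᶜ : Finset V).card = Fintype.card V :=
    Finset.card_add_card_compl W
  omega
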